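/- For the unweighted RDO algorithm with ranks y ∈ [0,1]^V drawn independently and uniformly: if in the realized greedy matching a vertex u is matched (at the decision time of its matched edge) while vertex v is still unmatched at that time, then changing y_v to any value strictly greater than that decision time yields a run in which u has the same matching status (matched to the same partner). -/

import Mathlib

/-- Whether vertex `x` is covered by the partial matching `M`. -/
def matchedIn {V : Type*} [DecidableEq V] (M : List (V × V)) (x : V) : Bool :=
  M.any fun e => e.1 = x || e.2 = x

/-- A run of the greedy matching process: vertices act in the given order; an unmatched
acting vertex `u` matches its most preferred unmatched neighbor (the first vertex of
`pref u` that is adjacent to `u` and unmatched), if one exists.  In each produced edge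
the first component is the active vertex. -/
def rdoRun {V : Type*} [DecidableEq V] (adj : V → V → Bool) (pref : V → List V) :
    List V → List (V × V) → List (V × V)
  | [], M => M
  | u :: rest, M =>
    if matchedIn M u then rdoRun adj pref rest M
    else
      match (pref u).find? (fun v => adj u v && !matchedIn M v) with
      | some v => rdoRun adj pref rest ((u, v) :: M)
      | none => rdoRun adj pref rest M

section Aux
variable {V : Type*} [DecidableEq V] (adj : V → V → Bool) (pref : V → List V)

theorem rdoRun_append (l₁ l₂ : List V) (M : List (V × V)) :
    rdoRun adj pref (l₁ ++ l₂) M = rdoRun adj pref l₂ (rdoRun adj pref l₁ M) := by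
  induction l₁ generalizing M with
  | nil => simp [rdoRun]
  | cons u rest ih =>
    rw [List.cons_append, rdoRun, rdoRun]
    split
    · exact ih M
    · split
      · exact ih _
      · exact ih M

theorem mem_rdoRun_of_mem {e : V × V} {M : List (V × V)} (L : List V) (h : e ∈ M) :
    e ∈ rdoRun adj pref L M := by
  induction L generalizing M with
  | nil => simpa [rdoRun] using h
  | cons u rest ih =>
    rw [rdoRun]
    split
    · exact ih h
    · split
      · exact ih (List.mem_cons_of_mem _ h)
      · exact ih h

theorem matchedIn_rdoRun_of_matchedIn {x : V} {M : List (V × V)} (L : List V)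
    (h : matchedIn M x = true) : matchedIn (rdoRun adj pref L M) x = true := by
  simp only [matchedIn, List.any_eq_true] at h ⊢
  obtain ⟨e, he, hx⟩ := h
  exact ⟨e, mem_rdoRun_of_mem adj pref L he, hx⟩

theorem rdoRun_mem_cases {c d : V} {M : List (V × V)} (L : List V)
    (h : (c, d) ∈ rdoRun adj pref L M) : (c, d) ∈ M ∨ c ∈ L := by
  induction L generalizing M with
  | nil => left; simpa [rdoRun] using h
  | cons u rest ih =>
    rw [rdoRun] at h
    split at h
    · rcases ih h with h' | h'
      · exact Or.inl h'
      · exact Or.inr (List.mem_cons_of_mem _ h')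
    · split at h
      · rcases ih h with h' | h'
        · rcases List.mem_cons.1 h' with h'' | h''
          · obtain ⟨rfl, rfl⟩ := Prod.mk.injEq .. ▸ h''
            exact Or.inr (List.mem_cons_self)
          · exact Or.inl h''
        · exact Or.inr (List.mem_cons_of_mem _ h')
      · rcases ih h with h' | h'
        · exact Or.inl h'
        · exact Or.inr (List.mem_cons_of_mem _ h')

theorem rdoRun_filter_ne (v : V) (L : List V) (M : List (V × V))
    (h : matchedIn (rdoRun adj pref L M) v = false) :
    rdoRun adj pref (L.filter (fun x => x ≠ v)) M = rdoRun adj pref L M := by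
  induction L generalizing M with
  | nil => simp
  | cons u rest ih =>
    by_cases huv : u = v
    · subst huv
      have hfil : (u :: rest).filter (fun x => x ≠ u) = rest.filter (fun x => x ≠ u) := by
        simp [List.filter_cons]
      rw [hfil]
      rw [rdoRun] at h
      by_cases hm : matchedIn M u = true
      · rw [if_pos hm] at h
        rw [ih _ h, rdoRun, if_pos hm]
      · rw [if_neg hm] at h
        cases hfind : (pref u).find? (fun w => adj u w && !matchedIn M w) with
        | some w =>
          simp only [hfind] at h
          have : matchedIn (rdoRun adj pref rest ((u, w) :: M)) u = true :=
            matchedIn_rdoRun_of_matchedIn adj pref rest (by simp [matchedIn])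
          rw [this] at h
          exact absurd h (by simp)
        | none =>
          simp only [hfind] at h
          rw [ih _ h, rdoRun, if_neg hm]
          simp only [hfind]
    · have hfil : (u :: rest).filter (fun x => x ≠ v)
          = u :: rest.filter (fun x => x ≠ v) := by
        simp [List.filter_cons, huv]
      rw [hfil]
      rw [rdoRun] at h
      by_cases hm : matchedIn M u = true
      · rw [if_pos hm] at h
        rw [rdoRun, if_pos hm, ih _ h, rdoRun, if_pos hm]
      · rw [if_neg hm] at h
        rw [rdoRun, if_neg hm]
        conv_rhs => rw [rdoRun, if_neg hm]
        cases hfind : (pref u).find? (fun w => adj u w && !matchedIn M w) with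
        | some w =>
          simp only [hfind] at h ⊢
          exact ih _ h
        | none =>
          simp only [hfind] at h ⊢
          exact ih _ h

end Aux


/-- In RDO with ranks `y`, suppose the edge `(a, b)` (with active
vertex `a`, hence decision time `y a`) covers `u`, while `v` is still unmatched at
that time, i.e. every matched edge covering `v` has decision time greater than `y a`.
Then changing `y v` to any value `t' > y a` yields a run in which `u` is matched to
the same partner by the same edge. -/
theorem stmt19 {V : Type*} [Fintype V] [DecidableEq V]
    (adj : V → V → Bool) (hsymm : ∀ a b : V, adj a b = adj b a)
    (pref : V → List V)
    (y : V → ℝ) (hy : Function.Injective y)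
    (L : List V) (hLsort : L.Pairwise (fun a b => y a < y b)) (hLall : ∀ x : V, x ∈ L)
    (u v a b : V) (hmem : (a, b) ∈ rdoRun adj pref L [])
    (hu : u = a ∨ u = b) (hv : v ≠ a ∧ v ≠ b)
    (hunmatched : ∀ c d : V, (c, d) ∈ rdoRun adj pref L [] → (v = c ∨ v = d) → y a < y c)
    (t' : ℝ) (ht' : y a < t')
    (hy' : Function.Injective (Function.update y v t'))
    (L' : List V) (hL'sort : L'.Pairwise (fun c d => Function.update y v t' c < Function.update y v t' d))
    (hL'all : ∀ x : V, x ∈ L') :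
    (a, b) ∈ rdoRun adj pref L' [] := by
  classical
  have hav : a ≠ v := fun h => hv.1 h.symm
  set y' := Function.update y v t' with hy'def
  have hy'a : y' a = y a := Function.update_of_ne hav _ _
  have hy'v : y' v = t' := Function.update_self _ _ _
  have hy'x : ∀ x : V, x ≠ v → y' x = y x := fun x hx => Function.update_of_ne hx _ _
  -- split L at a
  obtain ⟨L₁, L₂, hL⟩ := List.append_of_mem (hLall a)
  have hpair : L.Pairwise (fun c d => y c < y d) := hLsort
  rw [hL] at hpair
  have hp := List.pairwise_append.1 hpair
  have h1 : ∀ x ∈ L₁, y x < y a := fun x hx => hp.2.2 x hx a (List.mem_cons_self)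
  have h2 : ∀ x ∈ L₂, y a < y x := (List.pairwise_cons.1 hp.2.1).1
  -- split L' at a
  obtain ⟨L₁', L₂', hL'⟩ := List.append_of_mem (hL'all a)
  have hpair' : L'.Pairwise (fun c d => y' c < y' d) := hL'sort
  rw [hL'] at hpair'
  have hp' := List.pairwise_append.1 hpair'
  have h1' : ∀ x ∈ L₁', y' x < y' a := fun x hx => hp'.2.2 x hx a (List.mem_cons_self)
  have h2' : ∀ x ∈ L₂', y' a < y' x := (List.pairwise_cons.1 hp'.2.1).1
  -- membership characterizations
  have hmemL₁ : ∀ x : V, x ∈ L₁ ↔ y x < y a := by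
    intro x
    constructor
    · exact h1 x
    · intro hx
      have := hLall x
      rw [hL] at this
      rcases List.mem_append.1 this with h' | h'
      · exact h'
      · rcases List.mem_cons.1 h' with h'' | h''
        · exact absurd hx (by rw [h'']; exact lt_irrefl _)
        · exact absurd (h2 x h'') (by linarith)
  have hmemL₁' : ∀ x : V, x ∈ L₁' ↔ (x ≠ v ∧ y x < y a) := by
    intro x
    constructor
    · intro hx
      have hlt := h1' x hx
      rw [hy'a] at hlt
      have hxv : x ≠ v := by
        rintro rfl
        rw [hy'v] at hlt
        linarith
      rw [hy'x x hxv] at hlt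
      exact ⟨hxv, hlt⟩
    · rintro ⟨hxv, hxy⟩
      have := hL'all x
      rw [hL'] at this
      rcases List.mem_append.1 this with h' | h'
      · exact h'
      · rcases List.mem_cons.1 h' with h'' | h''
        · exact absurd hxy (by rw [h'']; exact lt_irrefl _)
        · have := h2' x h''
          rw [hy'a, hy'x x hxv] at this
          linarith
  -- nodup facts
  haveI hirr : IsIrrefl V (fun c d : V => y c < y d) := ⟨fun x => lt_irrefl _⟩
  haveI hirr' : IsIrrefl V (fun c d : V => y' c < y' d) := ⟨fun x => lt_irrefl _⟩
  haveI hanti : IsAntisymm V (fun c d : V => y c < y d) :=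
    ⟨fun _ _ h1 h2 => absurd h2 (not_lt.2 h1.le)⟩
  have hLnd : L.Nodup := hLsort.nodup
  have hL'nd : L'.Nodup := hL'sort.nodup
  have hL₁nd : L₁.Nodup := ((hL ▸ hLnd).sublist (List.sublist_append_left _ _))
  have hL₁'nd : L₁'.Nodup := ((hL' ▸ hL'nd).sublist (List.sublist_append_left _ _))
  -- L₁' equals L₁ with v filtered out
  have heq : L₁' = L₁.filter (fun x => x ≠ v) := by
    have hperm : List.Perm L₁' (L₁.filter (fun x => x ≠ v)) := by
      refine (List.perm_ext_iff_of_nodup hL₁'nd (hL₁nd.filter _)).2 ?_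
      intro x
      rw [hmemL₁' x, List.mem_filter, hmemL₁ x]
      simp [and_comm]
    have hs1 : L₁'.Pairwise (fun c d => y c < y d) := by
      refine (List.pairwise_append.1 hpair').1.imp_of_mem ?_
      intro c d hc hd hcd
      rw [hy'x c ((hmemL₁' c).1 hc).1, hy'x d ((hmemL₁' d).1 hd).1] at hcd
      exact hcd
    have hs2 : (L₁.filter (fun x => x ≠ v)).Pairwise (fun c d => y c < y d) :=
      (List.pairwise_append.1 hpair).1.sublist List.filter_sublist
    exact List.Perm.eq_of_pairwise' hs1 hs2 hperm
  -- the matching built before a acts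
  set M₀ := rdoRun adj pref L₁ ([] : List (V × V)) with hM₀
  have hR : rdoRun adj pref L [] = rdoRun adj pref (a :: L₂) M₀ := by
    rw [hL, rdoRun_append]
  have hM₀sub : ∀ e ∈ M₀, e ∈ rdoRun adj pref L [] := by
    intro e he
    rw [hR]
    exact mem_rdoRun_of_mem _ _ _ he
  have hM₀c : ∀ c d : V, (c, d) ∈ M₀ → c ∈ L₁ := by
    intro c d h
    rcases rdoRun_mem_cases adj pref L₁ h with h' | h'
    · simp at h'
    · exact h'
  have hM₀v : matchedIn M₀ v = false := by
    by_contra hcon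
    rw [Bool.not_eq_false, matchedIn, List.any_eq_true] at hcon
    obtain ⟨⟨c, d⟩, hcd, hor⟩ := hcon
    simp only [Bool.or_eq_true, decide_eq_true_eq] at hor
    have hlt := hunmatched c d (hM₀sub _ hcd) (by tauto)
    have := h1 c (hM₀c c d hcd)
    linarith
  have hM₀a : matchedIn M₀ a = false := by
    by_contra hcon
    rw [Bool.not_eq_false] at hcon
    rw [hR, rdoRun, if_pos hcon] at hmem
    rcases rdoRun_mem_cases adj pref L₂ hmem with h' | h'
    · exact absurd (h1 a (hM₀c a b h')) (lt_irrefl _)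
    · exact absurd (h2 a h') (lt_irrefl _)
  have hM₀a' : ¬ matchedIn M₀ a = true := by simp [hM₀a]
  have hfind : (pref a).find? (fun w => adj a w && !matchedIn M₀ w) = some b := by
    rw [hR, rdoRun, if_neg hM₀a'] at hmem
    cases hf : (pref a).find? (fun w => adj a w && !matchedIn M₀ w) with
    | none =>
      simp only [hf] at hmem
      rcases rdoRun_mem_cases adj pref L₂ hmem with h' | h'
      · exact absurd (h1 a (hM₀c a b h')) (lt_irrefl _)
      · exact absurd (h2 a h') (lt_irrefl _)
    | some w =>
      simp only [hf] at hmem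
      rcases rdoRun_mem_cases adj pref L₂ hmem with h' | h'
      · rcases List.mem_cons.1 h' with h'' | h''
        · obtain ⟨-, rfl⟩ := Prod.mk.injEq .. ▸ h''
          rfl
        · exact absurd (h1 a (hM₀c a b h'')) (lt_irrefl _)
      · exact absurd (h2 a h') (lt_irrefl _)
  -- finish: run the modified instance
  rw [hL', rdoRun_append, heq, rdoRun_filter_ne adj pref v L₁ [] (by exact hM₀v)]
  rw [rdoRun, if_neg hM₀a']
  rw [hfind]
  exact mem_rdoRun_of_mem _ _ _ (List.mem_cons_self)
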